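/- Let d, n and k_1, …, k_d be positive integers with k_1 + ⋯ + k_d = n, let F be an infinite field, and let E ⊆ F^n be a finite set. Then there exist finite sets Π_1, …, Π_d of affine k_1-, …, k_d-planes in F^n respectively, such that for every p ∈ E and every tuple of linear subspaces V_1, …, V_d of F^n with dim V_j = k_j and V_1 + ⋯ + V_d = F^n, there exist planes π_j ∈ Π_j (1 ≤ j ≤ d) satisfying π_j ∩ E = (p + V_j) ∩ E for each j and e(π_1) + ⋯ + e(π_d) = F^n. -/

import Mathlib

open Module Submodule

variable {F : Type} [Field F] {n : ℕ}

/-- Proper subspaces meet the moment curve in finitely many points. -/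
lemma mom_bad_finite (D : Submodule F (Fin n → F)) (hD : D ≠ ⊤) :
    {c : F | (fun i : Fin n => c ^ (i : ℕ)) ∈ D}.Finite := by
  by_contra hinf
  replace hinf : {c : F | (fun i : Fin n => c ^ (i : ℕ)) ∈ D}.Infinite := hinf
  obtain ⟨t, hts, htc⟩ := hinf.exists_subset_card_eq n
  let e := t.equivFinOfCardEq htc
  set c : Fin n → F := fun i => (e.symm i : F) with hc
  have hcinj : Function.Injective c := fun i j h => by
    simpa using e.symm.injective (Subtype.ext h)
  have hrows : LinearIndependent F (fun i => Matrix.vandermonde c i) :=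
    Matrix.linearIndependent_rows_iff_isUnit.2
      ((Matrix.isUnit_iff_isUnit_det _).2 (isUnit_iff_ne_zero.2 (Matrix.det_vandermonde_ne_zero_iff.2 hcinj)))
  have hle : Submodule.span F (Set.range fun i => Matrix.vandermonde c i) ≤ D := by
    rw [Submodule.span_le]
    rintro _ ⟨i, rfl⟩
    have : (c i) ∈ {c : F | (fun i : Fin n => c ^ (i : ℕ)) ∈ D} := hts (e.symm i).2
    exact this
  have hrank : finrank F (Submodule.span F (Set.range fun i => Matrix.vandermonde c i)) = n := by
    simpa using finrank_span_eq_card hrows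
  apply hD
  apply Submodule.eq_top_of_finrank_eq
  refine le_antisymm (Submodule.finrank_le D) ?_
  rw [Module.finrank_fin_fun]
  calc n = finrank F (span F (Set.range fun i => Matrix.vandermonde c i)) := hrank.symm
    _ ≤ finrank F D := Submodule.finrank_mono hle

/-- Choose a moment-curve point outside all proper subspaces in a finite family. -/
lemma mom_avoid [Infinite F] (Ds : Set (Submodule F (Fin n → F))) (hDs : Ds.Finite) :
    ∃ c : F, ∀ D ∈ Ds, D ≠ ⊤ → (fun i : Fin n => c ^ (i : ℕ)) ∉ D := by
  have hbad : (⋃ D ∈ {D ∈ Ds | D ≠ ⊤}, {c : F | (fun i : Fin n => c ^ (i : ℕ)) ∈ D}).Finite := by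
    refine Set.Finite.biUnion (hDs.subset (Set.sep_subset _ _)) ?_
    exact fun D hD => mom_bad_finite D hD.2
  obtain ⟨c, hc⟩ := hbad.exists_notMem
  refine ⟨c, fun D hD hDne hmem => hc ?_⟩
  exact Set.mem_biUnion (⟨hD, hDne⟩ : D ∈ {D ∈ Ds | D ≠ ⊤}) hmem

/-- A sequence of vectors in generic position relative to a finite family of subspaces. -/
lemma exists_generic [Infinite F] (C : Set (Submodule F (Fin n → F))) (hC : C.Finite) (m : ℕ) :
    ∃ v : ℕ → (Fin n → F), ∀ U ∈ C, ∀ T : Finset ℕ, (T : Set ℕ) ⊆ Set.Iio m →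
      min n (finrank F U + T.card)
        ≤ finrank F ↥(U ⊔ Submodule.span F (v '' (T : Set ℕ))) := by
  induction m with
  | zero =>
    refine ⟨fun _ => 0, fun U hU T hT => ?_⟩
    have hTe : T = ∅ := by
      ext x
      simp only [Finset.notMem_empty, iff_false]
      intro hx
      simpa using hT hx
    subst hTe
    have hle : U ≤ U ⊔ Submodule.span F ((fun _ : ℕ => (0 : Fin n → F)) '' ((∅ : Finset ℕ) : Set ℕ)) := le_sup_left
    calc min n (finrank F U + (∅ : Finset ℕ).card) ≤ finrank F U := by
          rw [Finset.card_empty, add_zero]; exact min_le_right n _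
      _ ≤ _ := Submodule.finrank_mono hle
  | succ m ih =>
    obtain ⟨v, hv⟩ := ih
    set Ds : Set (Submodule F (Fin n → F)) :=
      (fun q : Submodule F (Fin n → F) × Finset ℕ =>
        q.1 ⊔ Submodule.span F (v '' (q.2 : Set ℕ))) ''
        (C ×ˢ ((Finset.range m).powerset : Finset (Finset ℕ))) with hDs
    have hDsfin : Ds.Finite :=
      Set.Finite.image _ (hC.prod (Finset.finite_toSet _))
    obtain ⟨c, hc⟩ := mom_avoid Ds hDsfin
    set w : Fin n → F := fun i : Fin n => c ^ (i : ℕ) with hw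
    refine ⟨Function.update v m w, fun U hU T hT => ?_⟩
    set T' := T.erase m with hT'def
    have hT'T : ∀ x ∈ T', x ∈ T ∧ x ≠ m := by
      intro x hx
      rw [hT'def, Finset.mem_erase] at hx
      exact ⟨hx.2, hx.1⟩
    have hT'sub : (T' : Set ℕ) ⊆ Set.Iio m := by
      intro x hx
      rw [Finset.mem_coe] at hx
      obtain ⟨h1, h2⟩ := hT'T x hx
      have h3 : x ∈ Set.Iio (m + 1) := hT (Finset.mem_coe.2 h1)
      rw [Set.mem_Iio] at h3 ⊢
      omega
    have himg : Function.update v m w '' (T' : Set ℕ) = v '' (T' : Set ℕ) := by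
      apply Set.image_congr
      intro x hx
      have hxm : x ≠ m := (hT'T x (Finset.mem_coe.1 hx)).2
      simp [Function.update_of_ne hxm]
    by_cases hm : m ∈ T
    · have hTins : (T : Set ℕ) = insert m (T' : Set ℕ) := by
        rw [hT'def, Finset.coe_erase, Set.insert_diff_singleton,
          Set.insert_eq_of_mem (Finset.mem_coe.2 hm)]
      have himgT : Function.update v m w '' (T : Set ℕ)
          = insert w (v '' (T' : Set ℕ)) := by
        rw [hTins, Set.image_insert_eq, himg, Function.update_self]
      set D := U ⊔ Submodule.span F (v '' (T' : Set ℕ)) with hD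
      have hDmem : D ∈ Ds := by
        refine ⟨(U, T'), ⟨hU, ?_⟩, rfl⟩
        rw [Finset.mem_coe, Finset.mem_powerset]
        intro x hx
        rw [Finset.mem_range]
        exact Set.mem_Iio.1 (hT'sub (Finset.mem_coe.2 hx))
      have hsupD : U ⊔ Submodule.span F (Function.update v m w '' (T : Set ℕ))
          = D ⊔ Submodule.span F ({w} : Set (Fin n → F)) := by
        rw [himgT, Submodule.span_insert, hD]
        ac_rfl
      rw [hsupD]
      have hcard : T.card = T'.card + 1 := by
        rw [hT'def, Finset.card_erase_of_mem hm]
        have : 0 < T.card := Finset.card_pos.2 ⟨m, hm⟩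
        omega
      by_cases hDtop : D = ⊤
      · have htop : (D ⊔ Submodule.span F ({w} : Set (Fin n → F))) = ⊤ := by rw [hDtop]; exact top_sup_eq _
        rw [htop]
        have hfr : finrank F (⊤ : Submodule F (Fin n → F)) = n := by
          rw [finrank_top, Module.finrank_fin_fun]
        rw [hfr]
        exact min_le_left _ _
      · have hwD : w ∉ D := hc D hDmem hDtop
        have hlt : D < D ⊔ Submodule.span F ({w} : Set (Fin n → F)) := by
          refine lt_of_le_of_ne le_sup_left (fun h => hwD ?_)
          rw [h]
          exact Submodule.mem_sup_right (Submodule.mem_span_singleton_self w)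
        have h1 : finrank F D + 1 ≤ finrank F ↥(D ⊔ Submodule.span F ({w} : Set (Fin n → F))) :=
          Submodule.finrank_lt_finrank_of_lt hlt
        have h2 : min n (finrank F U + T'.card) ≤ finrank F D := hv U hU T' hT'sub
        have h3 : finrank F D < n := by
          have := Submodule.finrank_lt (K := F) (V := Fin n → F) hDtop
          rwa [Module.finrank_fin_fun] at this
        rcases le_or_gt n (finrank F U + T'.card) with hcase | hcase
        · rw [min_eq_left hcase] at h2
          omega
        · rw [min_eq_right hcase.le] at h2
          calc min n (finrank F U + T.card) ≤ finrank F U + T.card := min_le_right _ _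
            _ = finrank F U + T'.card + 1 := by omega
            _ ≤ finrank F D + 1 := by omega
            _ ≤ _ := h1
    · have himgT : Function.update v m w '' (T : Set ℕ) = v '' (T : Set ℕ) := by
        apply Set.image_congr
        intro x hx
        have hxm : x ≠ m := fun h => hm (by rwa [h] at hx)
        simp [Function.update_of_ne hxm]
      rw [himgT]
      apply hv U hU
      intro x hx
      have h3 : x ∈ Set.Iio (m + 1) := hT hx
      rw [Set.mem_Iio] at h3 ⊢
      have hxm : x ≠ m := fun h => hm (by rw [← h]; exact Finset.mem_coe.1 hx)
      omega

lemma finrank_sup_le' {M : Type*} [AddCommGroup M] [Module F M] [FiniteDimensional F M]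
    (A B : Submodule F M) : finrank F ↥(A ⊔ B) ≤ finrank F A + finrank F B := by
  have := Submodule.finrank_sup_add_finrank_inf_eq A B
  omega

lemma finrank_finset_sup_le {M : Type*} [AddCommGroup M] [Module F M] [FiniteDimensional F M]
    {ι : Type*} (s : Finset ι) (f : ι → Submodule F M) :
    finrank F ↥(s.sup f) ≤ ∑ i ∈ s, finrank F ↥(f i) := by
  classical
  induction s using Finset.induction with
  | empty => simp
  | @insert a s hns ih =>
    rw [Finset.sup_insert, Finset.sum_insert hns]
    calc finrank F ↥(f a ⊔ s.sup f) ≤ finrank F ↥(f a) + finrank F ↥(s.sup f) :=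
          finrank_sup_le' _ _
      _ ≤ _ := by omega

lemma finrank_iSup_le {M : Type*} [AddCommGroup M] [Module F M] [FiniteDimensional F M]
    {d : ℕ} (f : Fin d → Submodule F M) :
    finrank F ↥(⨆ j, f j) ≤ ∑ j, finrank F ↥(f j) := by
  have h : (⨆ j, f j) = Finset.univ.sup f := by
    rw [Finset.sup_eq_iSup]
    simp
  rw [h]
  exact finrank_finset_sup_le _ _

lemma exists_compl_in {M : Type*} [AddCommGroup M] [Module F M] [FiniteDimensional F M]
    {A V : Submodule F M} (h : A ≤ V) :
    ∃ C : Submodule F M, A ⊔ C = V ∧ finrank F A + finrank F C = finrank F V := by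
  obtain ⟨C', hC'⟩ := Submodule.exists_isCompl (A.comap V.subtype)
  refine ⟨C'.map V.subtype, ?_, ?_⟩
  · have hA : A = (A.comap V.subtype).map V.subtype := by
      rw [Submodule.map_comap_subtype, inf_eq_right.2 h]
    conv_lhs => rw [hA]
    rw [← Submodule.map_sup, hC'.sup_eq_top, Submodule.map_top, Submodule.range_subtype]
  · have h1 : finrank F (A.comap V.subtype) + finrank F C' = finrank F V :=
      Submodule.finrank_add_eq_of_isCompl hC'
    have h2 : finrank F ↥(C'.map V.subtype) = finrank F C' :=
      Submodule.finrank_map_subtype_eq V C'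
    have h3 : finrank F ↥(A.comap V.subtype) = finrank F A := by
      rw [← Submodule.finrank_map_subtype_eq V (A.comap V.subtype),
        Submodule.map_comap_subtype, inf_eq_right.2 h]
    omega

/-- Over an infinite field `F`, for any finite set `E ⊆ Fⁿ` and positive integers
`k 0, …, k (d-1)` with `∑ j, k j = n`, there exist finite sets `P j` of affine `k j`-planes in
`Fⁿ` such that for every `p ∈ E` and every tuple of linear subspaces `V j` with
`dim (V j) = k j` and `V 0 + ⋯ + V (d-1) = Fⁿ`, there are planes `π j ∈ P j` with
`π j ∩ E = (p + V j) ∩ E` for each `j` and whose directions together span `Fⁿ`. -/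
theorem exists_finite_plane_families
    (d n : ℕ) (hd : 0 < d) (hn : 0 < n) (k : Fin d → ℕ) (hk : ∀ j, 0 < k j)
    (hsum : (∑ j, k j) = n)
    (F : Type) [Field F] [Infinite F]
    (E : Set (Fin n → F)) (hE : E.Finite) :
    ∃ P : (j : Fin d) → Finset (AffineSubspace F (Fin n → F)),
      (∀ j, ∀ π ∈ P j,
        (π : Set (Fin n → F)).Nonempty ∧ Module.finrank F π.direction = k j) ∧
      ∀ p ∈ E, ∀ V : (j : Fin d) → Submodule F (Fin n → F),
        (∀ j, Module.finrank F (V j) = k j) → (⨆ j, V j) = ⊤ →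
        ∃ π : (j : Fin d) → AffineSubspace F (Fin n → F),
          (∀ j, π j ∈ P j) ∧
          (∀ j, (π j : Set (Fin n → F)) ∩ E
            = ((AffineSubspace.mk' p (V j) : AffineSubspace F (Fin n → F)) : Set (Fin n → F)) ∩ E) ∧
          (⨆ j, (π j).direction) = ⊤ := by
  classical
  obtain ⟨E', rfl⟩ := hE.exists_finset_coe
  set Us : (Fin n → F) → Finset (Fin n → F) → Submodule F (Fin n → F) :=
    fun p S => Submodule.span F ((fun q => q - p) '' (S : Set (Fin n → F))) with hUs
  let C1 : Set (Submodule F (Fin n → F)) :=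
    Set.range (fun x : E' × E'.powerset => Us x.1 x.2)
  let C2 : Set (Submodule F (Fin n → F)) :=
    Set.range (fun x : E' × E' × E'.powerset =>
      Us x.1 x.2.2 ⊔ Submodule.span F ({(x.2.1 : Fin n → F) - (x.1 : Fin n → F)} :
        Set (Fin n → F)))
  let C3 : Set (Submodule F (Fin n → F)) :=
    Set.range (fun x : E' × (Fin d → E'.powerset) => ⨆ j, Us x.1 (x.2 j))
  have hCfin : (C1 ∪ C2 ∪ C3).Finite :=
    Set.Finite.union (Set.Finite.union (Set.finite_range _) (Set.finite_range _))
      (Set.finite_range _)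
  obtain ⟨v, hv⟩ := exists_generic (C1 ∪ C2 ∪ C3) hCfin n
  set off : Fin d → ℕ := fun j => ∑ t ∈ Finset.univ.filter (fun t => t < j), k t with hoffdef
  have hoffeq : ∀ j, off j = ∑ t ∈ Finset.univ.filter (fun t => t < j), k t := fun j => rfl
  have hoff : ∀ j, off j + k j ≤ n := by
    intro j
    have hj : j ∉ Finset.univ.filter (fun t => t < j) := by simp
    calc off j + k j = ∑ t ∈ insert j (Finset.univ.filter (fun t => t < j)), k t := by
          rw [Finset.sum_insert hj, hoffeq j]; omega
      _ ≤ ∑ t ∈ Finset.univ, k t := Finset.sum_le_sum_of_subset (Finset.subset_univ _)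
      _ = n := hsum
  have hkn : ∀ j, k j ≤ n := fun j => by have := hoff j; omega
  have hofflt : ∀ j j' : Fin d, j < j' → off j + k j ≤ off j' := by
    intro j j' hjj
    have hj : j ∉ Finset.univ.filter (fun t => t < j) := by simp
    have hsubset : insert j (Finset.univ.filter (fun t => t < j)) ⊆
        Finset.univ.filter (fun t => t < j') := by
      intro t ht
      rcases Finset.mem_insert.1 ht with rfl | ht
      · simp [hjj]
      · simp only [Finset.mem_filter, Finset.mem_univ, true_and] at ht ⊢
        exact ht.trans hjj
    calc off j + k j = ∑ t ∈ insert j (Finset.univ.filter (fun t => t < j)), k t := by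
          rw [Finset.sum_insert hj, hoffeq j]; omega
      _ ≤ _ := Finset.sum_le_sum_of_subset hsubset
  set block : Fin d → ℕ → Finset ℕ := fun j b => (Finset.range b).image (fun s => off j + s)
    with hblockdef
  have hblock_card : ∀ j b, (block j b).card = b := by
    intro j b
    rw [hblockdef]
    simp only []
    rw [Finset.card_image_of_injective _ (add_right_injective (off j)), Finset.card_range]
  have hblock_mem : ∀ j b x, x ∈ block j b → off j ≤ x ∧ x < off j + b := by
    intro j b x hx
    simp only [hblockdef, Finset.mem_image, Finset.mem_range] at hx
    obtain ⟨s, hs, rfl⟩ := hx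
    omega
  have hblock_sub : ∀ j b, b ≤ k j → (block j b : Set ℕ) ⊆ Set.Iio n := by
    intro j b hb x hx
    obtain ⟨h1, h2⟩ := hblock_mem j b x (Finset.mem_coe.1 hx)
    have := hoff j
    rw [Set.mem_Iio]; omega
  have hblock_disj : ∀ (j j' : Fin d) b b', j ≠ j' → b ≤ k j → b' ≤ k j' →
      Disjoint (block j b) (block j' b') := by
    intro j j' b b' hne hb hb'
    rw [Finset.disjoint_left]
    intro x hx hx'
    obtain ⟨h1, h2⟩ := hblock_mem _ _ _ hx
    obtain ⟨h1', h2'⟩ := hblock_mem _ _ _ hx'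
    rcases lt_or_gt_of_ne hne with h | h
    · have := hofflt j j' h; omega
    · have := hofflt j' j h; omega
  set W : Fin d → (Fin n → F) → Finset (Fin n → F) → Submodule F (Fin n → F) :=
    fun j p S => Us p S ⊔
      Submodule.span F (v '' ((block j (k j - finrank F (Us p S))) : Set ℕ)) with hWdef
  have hC1 : ∀ (p : Fin n → F) (S : Finset (Fin n → F)), p ∈ E' → S ∈ E'.powerset →
      Us p S ∈ C1 ∪ C2 ∪ C3 :=
    fun p S hp hS => Or.inl (Or.inl ⟨(⟨p, hp⟩, ⟨S, hS⟩), rfl⟩)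
  have hC2 : ∀ (p q : Fin n → F) (S : Finset (Fin n → F)), p ∈ E' → q ∈ E' →
      S ∈ E'.powerset →
      Us p S ⊔ Submodule.span F ({q - p} : Set (Fin n → F)) ∈ C1 ∪ C2 ∪ C3 :=
    fun p q S hp hq hS => Or.inl (Or.inr ⟨(⟨p, hp⟩, ⟨q, hq⟩, ⟨S, hS⟩), rfl⟩)
  have hWrank : ∀ j (p : Fin n → F) (S : Finset (Fin n → F)), p ∈ E' → S ∈ E'.powerset →
      finrank F (Us p S) ≤ k j → finrank F (W j p S) = k j := by
    intro j p S hp hS hm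
    set b := k j - finrank F (Us p S) with hb
    have hlow := hv _ (hC1 p S hp hS) (block j b) (hblock_sub j b (by omega))
    rw [hblock_card] at hlow
    have hmin : min n (finrank F (Us p S) + b) = k j := by
      have := hkn j; rw [min_eq_right (by omega)]; omega
    rw [hmin] at hlow
    refine le_antisymm ?_ hlow
    have hsp : finrank F (Submodule.span F (v '' ((block j b) : Set ℕ))) ≤ b := by
      rw [← Finset.coe_image]
      calc finrank F (Submodule.span F (((block j b).image v : Finset _) : Set (Fin n → F)))
          ≤ ((block j b).image v).card := finrank_span_finset_le_card _
        _ ≤ (block j b).card := Finset.card_image_le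
        _ = b := hblock_card j b
    calc finrank F (W j p S)
        ≤ finrank F (Us p S)
          + finrank F (Submodule.span F (v '' ((block j b) : Set ℕ))) := finrank_sup_le' _ _
      _ ≤ k j := by omega
  have hWavoid : ∀ j (p : Fin n → F) (S : Finset (Fin n → F)) (q : Fin n → F),
      p ∈ E' → S ∈ E'.powerset → q ∈ E' →
      finrank F (Us p S) ≤ k j → k j < n → q - p ∉ Us p S → q - p ∉ W j p S := by
    intro j p S q hp hS hq hm hkjn hqU hqW
    set b := k j - finrank F (Us p S) with hb
    set U' := Us p S ⊔ Submodule.span F ({q - p} : Set (Fin n → F)) with hU'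
    have hU'rank : finrank F (Us p S) + 1 ≤ finrank F U' := by
      have hlt : Us p S < U' := lt_of_le_of_ne le_sup_left (fun hh => hqU (by
        rw [hh]; exact Submodule.mem_sup_right (Submodule.mem_span_singleton_self _)))
      exact Submodule.finrank_lt_finrank_of_lt hlt
    have hlow := hv _ (hC2 p q S hp hq hS) (block j b) (hblock_sub j b (by omega))
    rw [hblock_card] at hlow
    have hle : U' ⊔ Submodule.span F (v '' ((block j b) : Set ℕ)) ≤ W j p S := by
      rw [hU']
      refine sup_le (sup_le le_sup_left ?_) le_sup_right
      rw [Submodule.span_le]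
      intro x hx
      rw [Set.mem_singleton_iff] at hx
      rw [hx]
      exact hqW
    have hWr : finrank F (W j p S) = k j := hWrank j p S hp hS hm
    have h2 : min n (finrank F U' + b) ≤ finrank F (W j p S) :=
      le_trans hlow (Submodule.finrank_mono hle)
    rw [hWr] at h2
    have hminge : k j + 1 ≤ min n (finrank F U' + b) := le_min (by omega) (by omega)
    omega
  refine ⟨fun j => ((E' ×ˢ E'.powerset).filter
      (fun x => finrank F (Us x.1 x.2) ≤ k j)).image
      (fun x => AffineSubspace.mk' x.1 (W j x.1 x.2)), ?_, ?_⟩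
  · intro j π hπ
    simp only [Finset.mem_image, Finset.mem_filter, Finset.mem_product] at hπ
    obtain ⟨⟨p, S⟩, ⟨⟨hp, hS⟩, hm⟩, rfl⟩ := hπ
    refine ⟨⟨p, ?_⟩, ?_⟩
    · exact AffineSubspace.self_mem_mk' p _
    · rw [AffineSubspace.direction_mk']
      exact hWrank j p S hp hS hm
  · intro p hp V hVrank hVtop
    have hpE : p ∈ E' := hp
    set S : Fin d → Finset (Fin n → F) := fun j => E'.filter (fun x => x - p ∈ V j) with hSdef
    have hSP : ∀ j, S j ∈ E'.powerset := fun j => Finset.mem_powerset.2 (Finset.filter_subset _ _)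
    have hUV : ∀ j, Us p (S j) ≤ V j := by
      intro j
      apply Submodule.span_le.2
      rintro _ ⟨q, hq, rfl⟩
      rw [Finset.mem_coe, hSdef, Finset.mem_filter] at hq
      exact hq.2
    have hm : ∀ j, finrank F (Us p (S j)) ≤ k j := fun j => by
      have h := Submodule.finrank_mono (hUV j)
      rwa [hVrank j] at h
    refine ⟨fun j => AffineSubspace.mk' p (W j p (S j)), ?_, ?_, ?_⟩
    · intro j
      apply Finset.mem_image.2
      exact ⟨(p, S j), Finset.mem_filter.2 ⟨Finset.mem_product.2 ⟨hpE, hSP j⟩, hm j⟩, rfl⟩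
    · intro j
      ext x
      simp only [Set.mem_inter_iff]
      constructor
      · rintro ⟨hxW, hxE⟩
        rw [AffineSubspace.mem_coe, AffineSubspace.mem_mk'] at hxW ⊢
        rw [vsub_eq_sub] at hxW ⊢
        refine ⟨?_, hxE⟩
        by_contra hxV
        have hxU : x - p ∉ Us p (S j) := fun h => hxV (hUV j h)
        rcases eq_or_lt_of_le (hkn j) with hkn' | hkn'
        · apply hxV
          have hVt : V j = ⊤ := Submodule.eq_top_of_finrank_eq
            (by rw [hVrank j, hkn', Module.finrank_fin_fun])
          rw [hVt]; exact Submodule.mem_top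
        · exact hWavoid j p (S j) x hpE (hSP j) hxE (hm j) hkn' hxU hxW
      · rintro ⟨hxV, hxE⟩
        rw [AffineSubspace.mem_coe, AffineSubspace.mem_mk'] at hxV ⊢
        rw [vsub_eq_sub] at hxV ⊢
        refine ⟨?_, hxE⟩
        have hxS : x ∈ S j := by rw [hSdef]; exact Finset.mem_filter.2 ⟨hxE, hxV⟩
        have hxU : x - p ∈ Us p (S j) :=
          Submodule.subset_span ⟨x, Finset.mem_coe.2 hxS, rfl⟩
        exact Submodule.mem_sup_left hxU
    · have hdir : ∀ j, (AffineSubspace.mk' p (W j p (S j))).direction = W j p (S j) :=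
        fun j => AffineSubspace.direction_mk' _ _
      simp only [hdir]
      set b : Fin d → ℕ := fun j => k j - finrank F (Us p (S j)) with hbdef
      have hbk : ∀ j, b j ≤ k j := fun j => by simp only [hbdef]; omega
      choose Cc hCsup hCrank using fun j => exists_compl_in (hUV j)
      have hCb : ∀ j, finrank F (Cc j) = b j := by
        intro j
        have h1 := hCrank j
        rw [hVrank j] at h1
        have h2 := hm j
        simp only [hbdef]
        omega
      have hsum_b : n ≤ finrank F ↥(⨆ j, Us p (S j)) + ∑ j, b j := by
        have htople : (⊤ : Submodule F (Fin n → F)) ≤ (⨆ j, Us p (S j)) ⊔ (⨆ j, Cc j) := by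
          rw [← hVtop]
          refine iSup_le fun j => ?_
          rw [← hCsup j]
          have hA : Us p (S j) ≤ (⨆ j, Us p (S j)) ⊔ ⨆ j, Cc j :=
            le_sup_left.trans' (le_iSup (fun j => Us p (S j)) j)
          have hB : Cc j ≤ (⨆ j, Us p (S j)) ⊔ ⨆ j, Cc j :=
            le_sup_right.trans' (le_iSup Cc j)
          exact sup_le hA hB
        have h1 : n ≤ finrank F ↥((⨆ j, Us p (S j)) ⊔ (⨆ j, Cc j)) := by
          calc n = finrank F (⊤ : Submodule F (Fin n → F)) := by
                rw [finrank_top, Module.finrank_fin_fun]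
            _ ≤ _ := Submodule.finrank_mono htople
        have h2 := finrank_sup_le' (⨆ j, Us p (S j)) (⨆ j, Cc j)
        have h3 := finrank_iSup_le Cc
        have h4 : ∑ j, finrank F (Cc j) = ∑ j, b j :=
          Finset.sum_congr rfl fun j _ => hCb j
        omega
      set Tstar : Finset ℕ := Finset.univ.biUnion (fun j => block j (b j)) with hTdef
      have hTsub : (Tstar : Set ℕ) ⊆ Set.Iio n := by
        intro x hx
        rw [Finset.mem_coe, hTdef, Finset.mem_biUnion] at hx
        obtain ⟨j, _, hj⟩ := hx
        exact hblock_sub j (b j) (hbk j) (Finset.mem_coe.2 hj)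
      have hTcard : Tstar.card = ∑ j, b j := by
        rw [hTdef, Finset.card_biUnion]
        · exact Finset.sum_congr rfl fun j _ => hblock_card j (b j)
        · intro j _ j' _ hne
          exact hblock_disj j j' _ _ hne (hbk j) (hbk j')
      have hUsupC : (⨆ j, Us p (S j)) ∈ C1 ∪ C2 ∪ C3 :=
        Or.inr ⟨(⟨p, hpE⟩, fun j => ⟨S j, hSP j⟩), rfl⟩
      have hlow := hv _ hUsupC Tstar hTsub
      rw [hTcard, min_eq_left (by omega)] at hlow
      have hle2 : (⨆ j, Us p (S j)) ⊔ Submodule.span F (v '' (Tstar : Set ℕ))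
          ≤ ⨆ j, W j p (S j) := by
        refine sup_le (iSup_mono fun j => le_sup_left) ?_
        rw [Submodule.span_le]
        rintro _ ⟨t, ht, rfl⟩
        rw [Finset.mem_coe, hTdef, Finset.mem_biUnion] at ht
        obtain ⟨j, _, hj⟩ := ht
        have hmem : v t ∈ Submodule.span F (v '' ((block j (b j)) : Set ℕ)) :=
          Submodule.subset_span ⟨t, Finset.mem_coe.2 hj, rfl⟩
        exact (le_iSup (fun j => W j p (S j)) j) (Submodule.mem_sup_right hmem)
      have hfin : n ≤ finrank F ↥(⨆ j, W j p (S j)) :=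
        le_trans hlow (Submodule.finrank_mono hle2)
      apply Submodule.eq_top_of_finrank_eq
      rw [Module.finrank_fin_fun]
      refine le_antisymm ?_ hfin
      have := Submodule.finrank_le (⨆ j, W j p (S j))
      rwa [Module.finrank_fin_fun] at this
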